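/- Let u ∈ ℓ¹(ℤ) and v ∈ ℓ¹(ℤ), and let m ≥ 1 be an integer. The Fourier series of the transition T_{u,m} v = m (v ∗ u^⋆) ↓ m equals Σ_{j=0}^{m−1} v̂((ξ + 2πj)/m) conj(û((ξ + 2πj)/m)) for all ξ ∈ ℝ. -/

import Mathlib

open scoped BigOperators

/-- Fourier series `û(ξ) = Σ_k u(k) e^{-ikξ}` of a sequence on ℤ. -/
noncomputable def fser (u : ℤ → ℂ) (ξ : ℝ) : ℂ :=
  ∑' k : ℤ, u k * Complex.exp (-(Complex.I * (k : ℂ) * (ξ : ℂ)))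

/-- Convolution on ℤ. -/
noncomputable def conv1 (v u : ℤ → ℂ) (n : ℤ) : ℂ := ∑' k : ℤ, v k * u (n - k)

/-- Flip-conjugate `u^⋆(k) = conj (u (-k))`. -/
noncomputable def flipConj1 (u : ℤ → ℂ) (k : ℤ) : ℂ := starRingEnd ℂ (u (-k))

/-- The transition operator `T_{u,m} v = m ((v ∗ u^⋆) ↓ m)`. -/
noncomputable def trans1 (u v : ℤ → ℂ) (m : ℕ) (n : ℤ) : ℂ :=
  (m : ℂ) * conv1 v (flipConj1 u) ((m : ℤ) * n)

lemma nexp_one (z : ℂ) (h : z.re = 0) : ‖Complex.exp z‖ = 1 := by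
  rw [Complex.norm_exp, h, Real.exp_zero]

lemma root_sum (m : ℕ) (hm : 1 ≤ m) (c : ℤ) :
    ∑ j ∈ Finset.range m, Complex.exp (-(2 * Real.pi * Complex.I * c / m)) ^ j
      = if (m:ℤ) ∣ c then (m:ℂ) else 0 := by
  have hmz : (m:ℂ) ≠ 0 := Nat.cast_ne_zero.mpr (by omega)
  set ζ : ℂ := Complex.exp (-(2 * Real.pi * Complex.I * c / m)) with hζ
  have hζm : ζ ^ m = 1 := by
    rw [hζ, ← Complex.exp_nat_mul]
    have h1 : (m:ℂ) * (-(2 * Real.pi * Complex.I * c / m)) = ((-c : ℤ):ℂ) * (2 * Real.pi * Complex.I) := by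
      push_cast; field_simp
    rw [h1, Complex.exp_int_mul_two_pi_mul_I]
  by_cases hd : (m:ℤ) ∣ c
  · obtain ⟨d, rfl⟩ := hd
    have h1 : ζ = 1 := by
      rw [hζ]
      have h2 : (-(2 * Real.pi * Complex.I * ((m:ℤ)*d : ℤ) / m)) = ((-d : ℤ):ℂ) * (2 * Real.pi * Complex.I) := by
        push_cast; field_simp
      rw [h2, Complex.exp_int_mul_two_pi_mul_I]
    simp [h1, if_pos (Dvd.intro d rfl)]
  · have hζ1 : ζ ≠ 1 := by
      intro h
      obtain ⟨n, hn⟩ := Complex.exp_eq_one_iff.mp h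
      apply hd
      have hπ : (Real.pi : ℂ) ≠ 0 := by exact_mod_cast Real.pi_ne_zero
      have hne : (2 * (Real.pi:ℂ) * Complex.I) ≠ 0 := by
        simp [Real.pi_ne_zero, Complex.I_ne_zero]
      have h2 : (2 * (Real.pi:ℂ) * Complex.I) * (c:ℂ) = (2 * (Real.pi:ℂ) * Complex.I) * ((-n * m : ℤ):ℂ) := by
        field_simp at hn
        push_cast
        linear_combination -(2 * (Real.pi:ℂ) * Complex.I) * hn
      have h3 : c = -n * m := by exact_mod_cast mul_left_cancel₀ hne h2
      exact ⟨-n, by rw [h3]; ring⟩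
    rw [if_neg hd, geom_sum_eq hζ1, hζm]
    simp

set_option maxHeartbeats 2000000 in
theorem fser_trans (u v : ℤ → ℂ) (hu : Summable fun k => ‖u k‖)
    (hv : Summable fun k => ‖v k‖) (m : ℕ) (hm : 1 ≤ m) :
    ∀ ξ : ℝ, fser (fun n => trans1 u v m n) ξ =
      ∑ j ∈ Finset.range m,
        fser v ((ξ + 2 * Real.pi * j) / m) * starRingEnd ℂ (fser u ((ξ + 2 * Real.pi * j) / m)) := by
  intro ξ
  have hmz : (m:ℂ) ≠ 0 := Nat.cast_ne_zero.mpr (by omega)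
  set G : ℤ × ℤ → ℂ := fun p =>
    v p.1 * (starRingEnd ℂ) (u p.2) *
      Complex.exp (-(Complex.I * (((p.1 - p.2 : ℤ)) : ℂ) * (ξ : ℂ) / m)) *
      (if (m:ℤ) ∣ (p.1 - p.2) then (m:ℂ) else 0) with hG
  have hvu : Summable fun p : ℤ × ℤ => ‖v p.1‖ * ‖u p.2‖ :=
    hv.mul_of_nonneg hu (fun _ => norm_nonneg _) (fun _ => norm_nonneg _)
  have hGs : Summable G := by
    have hb : Summable (fun p : ℤ × ℤ => ‖v p.1‖ * ‖u p.2‖ * (m:ℝ)) := hvu.mul_right (m:ℝ)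
    apply Summable.of_norm_bounded hb
    intro p
    simp only [hG, norm_mul]
    rw [nexp_one _ (by simp), mul_one]
    split_ifs
    · simp
    · simp; positivity
  -- LHS
  set i : ℤ × ℤ → ℤ × ℤ := fun q => (q.2, q.2 - m * q.1) with hidef
  have hi : Function.Injective i := by
    rintro ⟨a1, a2⟩ ⟨b1, b2⟩ h
    simp only [hidef, Prod.mk.injEq] at h
    obtain ⟨h1, h2⟩ := h
    have hmz' : (m:ℤ) ≠ 0 := by exact_mod_cast (by omega : m ≠ 0)
    refine Prod.ext ?_ h1
    subst h1
    have : (m:ℤ) * a1 = m * b1 := by omega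
    exact mul_left_cancel₀ hmz' this
  have hsupp : Function.support G ⊆ Set.range i := by
    intro p hp
    have hdvd : (m:ℤ) ∣ (p.1 - p.2) := by
      by_contra h
      exact hp (by simp [hG, if_neg h])
    obtain ⟨d, hd⟩ := hdvd
    exact ⟨(d, p.1), by simp only [hidef]; exact Prod.ext rfl (by omega)⟩
  have hGi : ∀ q : ℤ × ℤ, G (i q) =
      v q.2 * (starRingEnd ℂ) (u (q.2 - m * q.1)) * Complex.exp (-(Complex.I * (q.1:ℂ) * ξ)) * m := by
    intro q
    simp only [hG, hidef]
    have h1 : (q.2 - (q.2 - (m:ℤ) * q.1)) = (m:ℤ) * q.1 := by ring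
    rw [h1, if_pos ⟨q.1, rfl⟩]
    have h2 : -(Complex.I * (((m:ℤ) * q.1 : ℤ):ℂ) * (ξ:ℂ) / m) = -(Complex.I * (q.1:ℂ) * ξ) := by
      push_cast
      field_simp
    rw [h2]
  have hcomp : Summable fun q : ℤ × ℤ => G (i q) := hGs.comp_injective hi
  have hLHS : fser (fun n => trans1 u v m n) ξ = ∑' p, G p := by
    rw [← hi.tsum_eq hsupp, Summable.tsum_prod hcomp]
    rw [fser]
    apply tsum_congr
    intro n
    simp only [hGi]
    rw [trans1, conv1]
    have hconv : (∑' k, v k * flipConj1 u ((m:ℤ) * n - k)) =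
        ∑' k, v k * (starRingEnd ℂ) (u (k - m * n)) := by
      apply tsum_congr; intro k
      simp [flipConj1, neg_sub]
    rw [hconv]
    rw [show (fun k : ℤ => v k * (starRingEnd ℂ) (u (k - (m:ℤ) * n)) *
        Complex.exp (-(Complex.I * (n:ℂ) * ξ)) * m) = fun k : ℤ =>
        (v k * (starRingEnd ℂ) (u (k - (m:ℤ) * n))) *
        (Complex.exp (-(Complex.I * (n:ℂ) * ξ)) * m) from by funext k; ring]
    rw [tsum_mul_right]
    ring
  rw [hLHS]
  -- RHS
  have hnormv : ∀ η : ℝ, Summable fun a : ℤ => ‖v a * Complex.exp (-(Complex.I * (a:ℂ) * η))‖ := by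
    intro η
    apply Summable.of_norm_bounded hv
    intro a
    rw [norm_norm, norm_mul, nexp_one _ (by simp), mul_one]
  have hnormu : ∀ η : ℝ, Summable fun b : ℤ => ‖(starRingEnd ℂ) (u b) * Complex.exp (Complex.I * (b:ℂ) * η)‖ := by
    intro η
    apply Summable.of_norm_bounded hu
    intro b
    rw [norm_norm, norm_mul, nexp_one _ (by simp), RingHomIsometric.norm_map, mul_one]
  set F : ℕ → ℤ × ℤ → ℂ := fun j p =>
    v p.1 * (starRingEnd ℂ) (u p.2) *
      Complex.exp (-(Complex.I * (((p.1 - p.2 : ℤ)) : ℂ) * (((ξ + 2 * Real.pi * j) / m : ℝ) : ℂ))) with hF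
  have hFs : ∀ j : ℕ, Summable (F j) := by
    intro j
    apply Summable.of_norm_bounded hvu
    intro p
    simp only [hF, norm_mul]
    rw [nexp_one _ (by simp), RingHomIsometric.norm_map, mul_one]
  have hterm : ∀ j : ℕ,
      fser v ((ξ + 2 * Real.pi * j) / m) * (starRingEnd ℂ) (fser u ((ξ + 2 * Real.pi * j) / m)) =
      ∑' p : ℤ × ℤ, F j p := by
    intro j
    have hηc : ((((ξ + 2 * Real.pi * j) / m : ℝ)) : ℂ) = ((ξ:ℂ) + 2 * (Real.pi:ℂ) * j) / m := by
      push_cast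
      ring
    have hconj : (starRingEnd ℂ) (fser u ((ξ + 2 * Real.pi * j) / m)) =
        ∑' b : ℤ, (starRingEnd ℂ) (u b) *
          Complex.exp (Complex.I * (b:ℂ) * (((ξ + 2 * Real.pi * j) / m : ℝ) : ℂ)) := by
      rw [fser]
      rw [show ((starRingEnd ℂ) (∑' k : ℤ, u k * Complex.exp
          (-(Complex.I * (k:ℂ) * (((ξ + 2 * Real.pi * j) / m : ℝ) : ℂ))))) =
          ∑' k : ℤ, star (u k * Complex.exp
          (-(Complex.I * (k:ℂ) * (((ξ + 2 * Real.pi * j) / m : ℝ) : ℂ)))) from tsum_star]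
      apply tsum_congr
      intro b
      have h1 : star (Complex.exp (-(Complex.I * (b:ℂ) * (((ξ + 2 * Real.pi * j) / m : ℝ) : ℂ)))) =
          Complex.exp (Complex.I * (b:ℂ) * (((ξ + 2 * Real.pi * j) / m : ℝ) : ℂ)) := by
        refine Eq.trans ((Complex.exp_conj _).symm :
          (starRingEnd ℂ) (Complex.exp (-(Complex.I * (b:ℂ) * (((ξ + 2 * Real.pi * j) / m : ℝ) : ℂ)))) =
          Complex.exp ((starRingEnd ℂ) (-(Complex.I * (b:ℂ) * (((ξ + 2 * Real.pi * j) / m : ℝ) : ℂ))))) ?_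
        congr 1
        simp only [map_neg, map_mul, Complex.conj_I, Complex.conj_ofReal, map_intCast]
        ring
      rw [star_mul', h1]
      rfl
    rw [fser, hconj, tsum_mul_tsum_of_summable_norm (hnormv _) (hnormu _)]
    apply tsum_congr
    intro p
    simp only [hF]
    rw [mul_mul_mul_comm, ← Complex.exp_add]
    congr 2
    rw [hηc]
    push_cast
    ring
  calc ∑' p, G p
      = ∑' p, ∑ j ∈ Finset.range m, F j p := by
        apply tsum_congr
        intro p
        have hsplit : ∀ j : ℕ, F j p =
            v p.1 * (starRingEnd ℂ) (u p.2) *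
            Complex.exp (-(Complex.I * (((p.1 - p.2 : ℤ)) : ℂ) * (ξ:ℂ) / m)) *
            Complex.exp (-(2 * Real.pi * Complex.I * ((p.1 - p.2 : ℤ):ℂ) / m)) ^ j := by
          intro j
          simp only [hF]
          have he : Complex.exp (-(Complex.I * (((p.1 - p.2 : ℤ)) : ℂ) *
              (((ξ + 2 * Real.pi * j) / m : ℝ) : ℂ))) =
              Complex.exp (-(Complex.I * (((p.1 - p.2 : ℤ)) : ℂ) * (ξ:ℂ) / m)) *
              Complex.exp (-(2 * Real.pi * Complex.I * (((p.1 - p.2 : ℤ)) : ℂ) / m)) ^ j := by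
            rw [← Complex.exp_nat_mul, ← Complex.exp_add]
            congr 1
            have hc : ((((ξ + 2 * Real.pi * j) / m : ℝ)) : ℂ) =
                ((ξ:ℂ) + 2 * (Real.pi:ℂ) * j) / m := by push_cast; ring
            rw [hc]
            ring
          rw [he]
          ring
        simp only [hsplit, ← Finset.mul_sum, root_sum m hm (p.1 - p.2)]
        rfl
    _ = ∑ j ∈ Finset.range m, ∑' p, F j p :=
        Summable.tsum_finsetSum (fun j _ => hFs j)
    _ = ∑ j ∈ Finset.range m,
        fser v ((ξ + 2 * Real.pi * j) / m) * starRingEnd ℂ (fser u ((ξ + 2 * Real.pi * j) / m)) := by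
        apply Finset.sum_congr rfl
        intro j _
        exact (hterm j).symm
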